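/- Let F : ℝ³ → ℝ be any C¹ function with ∂F/∂u_i(u) = a_i(e^{u₁}, e^{u₂}, e^{u₃}) for i = 1, 2, 3, and let S = {u ∈ ℝ³ : u₁ + u₂ + u₃ = 0 and e^{u_i} + e^{u_j} > e^{u_k} for every permutation (i,j,k) of (1,2,3)}. Then F is strictly convex on S in the following sense: for any two distinct points u, v ∈ S such that the whole segment [u, v] lies in S, F((u+v)/2) < (F(u) + F(v))/2. -/

import Mathlib

open Real

/-- Positivity of the Rivin quadratic form. -/
lemma Ppos (w0 w1 w2 x0 x1 x2 : ℝ) (hx0 : 0 < x0) (hx1 : 0 < x1) (hx2 : 0 < x2)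
    (h1 : x0 < x1 + x2) (h2 : x1 < x0 + x2) (h3 : x2 < x0 + x1)
    (hs : w0 + w1 + w2 = 0) (hne : w0 - w1 ≠ 0 ∨ w1 - w2 ≠ 0) :
    0 < w0 * ((w2 - w1) * (x1 ^ 2 - x2 ^ 2) + (2 * w0 - w1 - w2) * x0 ^ 2)
      + w1 * ((w0 - w2) * (x2 ^ 2 - x0 ^ 2) + (2 * w1 - w2 - w0) * x1 ^ 2)
      + w2 * ((w1 - w0) * (x0 ^ 2 - x1 ^ 2) + (2 * w2 - w0 - w1) * x2 ^ 2) := by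
  have hw2 : w2 = -(w0 + w1) := by linarith
  subst hw2
  by_cases hb : w0 + 2 * w1 = 0
  · have ha : w0 - w1 ≠ 0 := by
      rcases hne with h | h
      · exact h
      · exact absurd (by linarith : w1 - -(w0 + w1) = 0) h
    have hw1 : w1 = -w0 / 2 := by linarith
    subst hw1
    have hw0 : w0 ≠ 0 := by intro h; subst h; norm_num at ha
    have hsq : 0 < w0 ^ 2 := sq_pos_of_ne_zero hw0
    nlinarith [mul_pos hsq (mul_pos hx0 hx0)]
  · have hbsq : 0 < (w0 + 2 * w1) ^ 2 := sq_pos_of_ne_zero hb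
    have hq : 0 < 4 * x0 ^ 2 * x2 ^ 2 - (x0 ^ 2 + x2 ^ 2 - x1 ^ 2) ^ 2 := by
      have e : 4 * x0 ^ 2 * x2 ^ 2 - (x0 ^ 2 + x2 ^ 2 - x1 ^ 2) ^ 2
          = (x0 + x2 + x1) * (x0 + x2 - x1) * (x1 + x0 - x2) * (x1 - x0 + x2) := by ring
      rw [e]
      have p1 : 0 < x0 + x2 + x1 := by linarith
      have p2 : 0 < x0 + x2 - x1 := by linarith
      have p3 : 0 < x1 + x0 - x2 := by linarith
      have p4 : 0 < x1 - x0 + x2 := by linarith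
      exact mul_pos (mul_pos (mul_pos p1 p2) p3) p4
    have hx0sq : 0 < x0 ^ 2 := by positivity
    nlinarith [sq_nonneg (2 * (w0 - w1) * x0 ^ 2 + (w0 + 2 * w1) * (x0 ^ 2 + x2 ^ 2 - x1 ^ 2)),
      mul_pos hbsq hq]

/-- Derivative of one inner angle along an exponential path. -/
lemma aux_deriv (α β γ wa wb wc t : ℝ)
    (h1 : Real.exp (α + t * wa) < Real.exp (β + t * wb) + Real.exp (γ + t * wc))
    (h2 : Real.exp (β + t * wb) < Real.exp (α + t * wa) + Real.exp (γ + t * wc))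
    (h3 : Real.exp (γ + t * wc) < Real.exp (α + t * wa) + Real.exp (β + t * wb)) :
    HasDerivAt (fun s => Real.arccos ((Real.exp (β + s * wb) ^ 2 + Real.exp (γ + s * wc) ^ 2
        - Real.exp (α + s * wa) ^ 2) / (2 * Real.exp (β + s * wb) * Real.exp (γ + s * wc))))
      (((wc - wb) * (Real.exp (β + t * wb) ^ 2 - Real.exp (γ + t * wc) ^ 2)
          + (2 * wa - wb - wc) * Real.exp (α + t * wa) ^ 2)
        / Real.sqrt (2 * Real.exp (α + t * wa) ^ 2 * Real.exp (β + t * wb) ^ 2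
            + 2 * Real.exp (β + t * wb) ^ 2 * Real.exp (γ + t * wc) ^ 2
            + 2 * Real.exp (α + t * wa) ^ 2 * Real.exp (γ + t * wc) ^ 2
            - Real.exp (α + t * wa) ^ 4 - Real.exp (β + t * wb) ^ 4
            - Real.exp (γ + t * wc) ^ 4)) t := by
  set A := Real.exp (α + t * wa) with hA
  set B := Real.exp (β + t * wb) with hB
  set C := Real.exp (γ + t * wc) with hC
  have hApos : 0 < A := Real.exp_pos _
  have hBpos : 0 < B := Real.exp_pos _
  have hCpos : 0 < C := Real.exp_pos _
  have hA' : HasDerivAt (fun s => Real.exp (α + s * wa)) (A * wa) t := by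
    have h : HasDerivAt (fun s : ℝ => α + s * wa) wa t := by
      simpa using ((hasDerivAt_id t).mul_const wa).const_add α
    simpa [hA] using h.exp
  have hB' : HasDerivAt (fun s => Real.exp (β + s * wb)) (B * wb) t := by
    have h : HasDerivAt (fun s : ℝ => β + s * wb) wb t := by
      simpa using ((hasDerivAt_id t).mul_const wb).const_add β
    simpa [hB] using h.exp
  have hC' : HasDerivAt (fun s => Real.exp (γ + s * wc)) (C * wc) t := by
    have h : HasDerivAt (fun s : ℝ => γ + s * wc) wc t := by
      simpa using ((hasDerivAt_id t).mul_const wc).const_add γ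
    simpa [hC] using h.exp
  have hN : HasDerivAt (fun s => Real.exp (β + s * wb) ^ 2 + Real.exp (γ + s * wc) ^ 2
      - Real.exp (α + s * wa) ^ 2)
      (((2 : ℕ) * B ^ 1 * (B * wb) + (2 : ℕ) * C ^ 1 * (C * wc)) - (2 : ℕ) * A ^ 1 * (A * wa)) t :=
    ((hB'.pow 2).add (hC'.pow 2)).sub (hA'.pow 2)
  have hDden : HasDerivAt (fun s => 2 * Real.exp (β + s * wb) * Real.exp (γ + s * wc))
      ((2 * (B * wb)) * C + (2 * B) * (C * wc)) t :=
    (hB'.const_mul 2).mul hC'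
  have hden : (2 : ℝ) * B * C ≠ 0 := by positivity
  have hc : HasDerivAt (fun s => (Real.exp (β + s * wb) ^ 2 + Real.exp (γ + s * wc) ^ 2
      - Real.exp (α + s * wa) ^ 2) / (2 * Real.exp (β + s * wb) * Real.exp (γ + s * wc)))
      (((((2 : ℕ) * B ^ 1 * (B * wb) + (2 : ℕ) * C ^ 1 * (C * wc)) - (2 : ℕ) * A ^ 1 * (A * wa))
          * (2 * B * C)
        - (B ^ 2 + C ^ 2 - A ^ 2) * ((2 * (B * wb)) * C + (2 * B) * (C * wc)))
        / (2 * B * C) ^ 2) t := hN.div hDden hden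
  set r := (B ^ 2 + C ^ 2 - A ^ 2) / (2 * B * C) with hr
  have hrlt : r < 1 := by
    rw [hr, div_lt_one (by positivity)]
    nlinarith
  have hrgt : (-1 : ℝ) < r := by
    rw [hr, lt_div_iff₀ (by positivity)]
    nlinarith
  have hQ : 0 < 2 * A ^ 2 * B ^ 2 + 2 * B ^ 2 * C ^ 2 + 2 * A ^ 2 * C ^ 2
      - A ^ 4 - B ^ 4 - C ^ 4 := by
    nlinarith [mul_pos (mul_pos (mul_pos (by linarith : (0:ℝ) < A + B + C)
      (by linarith : (0:ℝ) < -A + B + C)) (by linarith : (0:ℝ) < A - B + C))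
      (by linarith : (0:ℝ) < A + B - C)]
  set Q := 2 * A ^ 2 * B ^ 2 + 2 * B ^ 2 * C ^ 2 + 2 * A ^ 2 * C ^ 2
      - A ^ 4 - B ^ 4 - C ^ 4 with hQdef
  have hsqrtQ : 0 < Real.sqrt Q := Real.sqrt_pos.2 hQ
  have harc := (Real.hasDerivAt_arccos (ne_of_gt hrgt) (ne_of_lt hrlt)).comp t hc
  have hsq : Real.sqrt (1 - r ^ 2) = Real.sqrt Q / (2 * B * C) := by
    have e : 1 - r ^ 2 = Q / (2 * B * C) ^ 2 := by
      rw [hr]; field_simp; ring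
    rw [e, Real.sqrt_div hQ.le, Real.sqrt_sq (by positivity)]
  refine harc.congr_deriv ?_
  rw [hsq]
  push_cast
  field_simp
  ring

/-- The inner angle, opposite the edge of length `x i`, of the generalized Euclidean
triangle of edge lengths `x 0, x 1, x 2` (clamped arccos convention). -/
noncomputable def ang (i : Fin 3) (x : Fin 3 → ℝ) : ℝ :=
  Real.arccos (((x (i + 1)) ^ 2 + (x (i + 2)) ^ 2 - (x i) ^ 2) / (2 * x (i + 1) * x (i + 2)))

theorem stmt2 (F : (Fin 3 → ℝ) → ℝ) (hF : ContDiff ℝ 1 F)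
    (hgrad : ∀ u : Fin 3 → ℝ, ∀ i : Fin 3,
      fderiv ℝ F u (Pi.single i 1) = ang i (fun m => Real.exp (u m)))
    (S : Set (Fin 3 → ℝ))
    (hS : S = {u : Fin 3 → ℝ | u 0 + u 1 + u 2 = 0 ∧
      ∀ i j k : Fin 3, i ≠ j → j ≠ k → i ≠ k →
        Real.exp (u k) < Real.exp (u i) + Real.exp (u j)})
    (u v : Fin 3 → ℝ) (hu : u ∈ S) (hv : v ∈ S) (huv : u ≠ v)
    (hseg : segment ℝ u v ⊆ S) :
    F (((1 : ℝ) / 2) • (u + v)) < (F u + F v) / 2 := by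
  obtain ⟨w, hw⟩ : ∃ w : Fin 3 → ℝ, w = v - u := ⟨_, rfl⟩
  have hwm : ∀ m, w m = v m - u m := fun m => by rw [hw]; rfl
  -- the sum of the components of w vanishes
  have husum : u 0 + u 1 + u 2 = 0 := by rw [hS] at hu; exact hu.1
  have hvsum : v 0 + v 1 + v 2 = 0 := by rw [hS] at hv; exact hv.1
  have hwsum : w 0 + w 1 + w 2 = 0 := by rw [hwm, hwm, hwm]; linarith
  -- w is not a constant vector
  have hwne : w 0 - w 1 ≠ 0 ∨ w 1 - w 2 ≠ 0 := by
    by_contra h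
    push_neg at h
    obtain ⟨h1, h2⟩ := h
    have e0 : w 0 = 0 := by linarith
    have e1 : w 1 = 0 := by linarith
    have e2 : w 2 = 0 := by linarith
    have hw0 : w = 0 := by funext m; fin_cases m; exacts [e0, e1, e2]
    rw [hw] at hw0
    exact huv (sub_eq_zero.mp hw0).symm
  -- points of the segment lie in S
  have hseg' : ∀ t ∈ Set.Icc (0:ℝ) 1, u + t • w ∈ S := by
    intro t ht
    apply hseg
    rw [segment_eq_image']
    exact ⟨t, ht, by rw [hw]⟩
  -- the derivative of F along the segment
  have hgd : ∀ t : ℝ, HasDerivAt (fun s => F (u + s • w))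
      ((fderiv ℝ F (u + t • w)) w) t := by
    intro t
    have hp : HasDerivAt (fun s : ℝ => u + s • w) w t := by
      simpa using ((hasDerivAt_id t).smul_const w).const_add u
    have hcomp : HasDerivAt (F ∘ fun s : ℝ => u + s • w) ((fderiv ℝ F (u + t • w)) w) t :=
      HasFDerivAt.comp_hasDerivAt t ((hF.differentiable one_ne_zero _).hasFDerivAt) hp
    exact hcomp
  -- the explicit formula for the derivative
  set φe : ℝ → ℝ := fun t =>
    w 0 * Real.arccos ((Real.exp (u 1 + t * w 1) ^ 2 + Real.exp (u 2 + t * w 2) ^ 2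
        - Real.exp (u 0 + t * w 0) ^ 2)
      / (2 * Real.exp (u 1 + t * w 1) * Real.exp (u 2 + t * w 2)))
    + w 1 * Real.arccos ((Real.exp (u 2 + t * w 2) ^ 2 + Real.exp (u 0 + t * w 0) ^ 2
        - Real.exp (u 1 + t * w 1) ^ 2)
      / (2 * Real.exp (u 2 + t * w 2) * Real.exp (u 0 + t * w 0)))
    + w 2 * Real.arccos ((Real.exp (u 0 + t * w 0) ^ 2 + Real.exp (u 1 + t * w 1) ^ 2
        - Real.exp (u 2 + t * w 2) ^ 2)
      / (2 * Real.exp (u 0 + t * w 0) * Real.exp (u 1 + t * w 1))) with hφe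
  have hwdec : w = ∑ i : Fin 3, Pi.single i (w i) := by
    funext m
    rw [Fin.sum_univ_three]
    fin_cases m <;> simp
  have hsingle : ∀ i : Fin 3, (Pi.single i (w i) : Fin 3 → ℝ)
      = w i • (Pi.single i 1 : Fin 3 → ℝ) := by
    intro i
    funext m
    simp only [Pi.single_apply, Pi.smul_apply, smul_eq_mul]
    split <;> simp
  have base : ∀ q : Fin 3 → ℝ, (fderiv ℝ F q) w
      = w 0 * ang 0 (fun m => Real.exp (q m)) + w 1 * ang 1 (fun m => Real.exp (q m))
        + w 2 * ang 2 (fun m => Real.exp (q m)) := by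
    intro q
    conv_lhs => rw [hwdec]
    rw [map_sum, Fin.sum_univ_three]
    simp only [hsingle, map_smul, smul_eq_mul, hgrad]
  have hφeq : ∀ t : ℝ, (fderiv ℝ F (u + t • w)) w = φe t := by
    intro t
    rw [base]
    have i01 : (0 : Fin 3) + 1 = 1 := rfl
    have i02 : (0 : Fin 3) + 2 = 2 := rfl
    have i11 : (1 : Fin 3) + 1 = 2 := rfl
    have i12 : (1 : Fin 3) + 2 = 0 := rfl
    have i21 : (2 : Fin 3) + 1 = 0 := rfl
    have i22 : (2 : Fin 3) + 2 = 1 := rfl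
    simp only [ang, i01, i02, i11, i12, i21, i22, hφe, Pi.add_apply, Pi.smul_apply, smul_eq_mul]
  -- the derivative of φe is positive on the segment
  have key : ∀ t ∈ Set.Icc (0:ℝ) 1, ∃ d, HasDerivAt φe d t ∧ 0 < d := by
    intro t ht
    have hqS := hseg' t ht
    rw [hS] at hqS
    obtain ⟨hsum, htri⟩ := hqS
    have hq : ∀ i j k : Fin 3, i ≠ j → j ≠ k → i ≠ k →
        Real.exp (u k + t * w k) < Real.exp (u i + t * w i) + Real.exp (u j + t * w j) := by
      intro i j k hij hjk hik
      have := htri i j k hij hjk hik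
      simpa [Pi.add_apply, Pi.smul_apply, smul_eq_mul] using this
    have T0 := hq 1 2 0 (by decide) (by decide) (by decide)
    have T0' := hq 2 1 0 (by decide) (by decide) (by decide)
    have T1 := hq 2 0 1 (by decide) (by decide) (by decide)
    have T1' := hq 0 2 1 (by decide) (by decide) (by decide)
    have T2 := hq 0 1 2 (by decide) (by decide) (by decide)
    have T2' := hq 1 0 2 (by decide) (by decide) (by decide)
    have d0 := aux_deriv (u 0) (u 1) (u 2) (w 0) (w 1) (w 2) t T0 T1' T2
    have d1 := aux_deriv (u 1) (u 2) (u 0) (w 1) (w 2) (w 0) t T1 T2' T0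
    have d2 := aux_deriv (u 2) (u 0) (u 1) (w 2) (w 0) (w 1) t T2 T0' T1
    set x0 := Real.exp (u 0 + t * w 0) with hx0
    set x1 := Real.exp (u 1 + t * w 1) with hx1
    set x2 := Real.exp (u 2 + t * w 2) with hx2
    have e1 : 2 * x1 ^ 2 * x2 ^ 2 + 2 * x2 ^ 2 * x0 ^ 2 + 2 * x1 ^ 2 * x0 ^ 2
        - x1 ^ 4 - x2 ^ 4 - x0 ^ 4
        = 2 * x0 ^ 2 * x1 ^ 2 + 2 * x1 ^ 2 * x2 ^ 2 + 2 * x0 ^ 2 * x2 ^ 2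
        - x0 ^ 4 - x1 ^ 4 - x2 ^ 4 := by ring
    have e2 : 2 * x2 ^ 2 * x0 ^ 2 + 2 * x0 ^ 2 * x1 ^ 2 + 2 * x2 ^ 2 * x1 ^ 2
        - x2 ^ 4 - x0 ^ 4 - x1 ^ 4
        = 2 * x0 ^ 2 * x1 ^ 2 + 2 * x1 ^ 2 * x2 ^ 2 + 2 * x0 ^ 2 * x2 ^ 2
        - x0 ^ 4 - x1 ^ 4 - x2 ^ 4 := by ring
    rw [e1] at d1
    rw [e2] at d2
    have hD := ((d0.const_mul (w 0)).add (d1.const_mul (w 1))).add (d2.const_mul (w 2))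
    refine ⟨_, hD, ?_⟩
    have hx0p : 0 < x0 := Real.exp_pos _
    have hx1p : 0 < x1 := Real.exp_pos _
    have hx2p : 0 < x2 := Real.exp_pos _
    have hQc : 0 < 2 * x0 ^ 2 * x1 ^ 2 + 2 * x1 ^ 2 * x2 ^ 2 + 2 * x0 ^ 2 * x2 ^ 2
        - x0 ^ 4 - x1 ^ 4 - x2 ^ 4 := by
      nlinarith [mul_pos (mul_pos (mul_pos (by linarith : (0:ℝ) < x0 + x1 + x2)
        (by linarith : (0:ℝ) < -x0 + x1 + x2)) (by linarith : (0:ℝ) < x0 - x1 + x2))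
        (by linarith : (0:ℝ) < x0 + x1 - x2)]
    have hsq : 0 < Real.sqrt (2 * x0 ^ 2 * x1 ^ 2 + 2 * x1 ^ 2 * x2 ^ 2 + 2 * x0 ^ 2 * x2 ^ 2
        - x0 ^ 4 - x1 ^ 4 - x2 ^ 4) := Real.sqrt_pos.2 hQc
    have hP := Ppos (w 0) (w 1) (w 2) x0 x1 x2 hx0p hx1p hx2p T0 T1' T2 hwsum hwne
    set sq := Real.sqrt (2 * x0 ^ 2 * x1 ^ 2 + 2 * x1 ^ 2 * x2 ^ 2 + 2 * x0 ^ 2 * x2 ^ 2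
        - x0 ^ 4 - x1 ^ 4 - x2 ^ 4) with hsqdef
    have eform : w 0 * (((w 2 - w 1) * (x1 ^ 2 - x2 ^ 2) + (2 * w 0 - w 1 - w 2) * x0 ^ 2) / sq)
        + w 1 * (((w 0 - w 2) * (x2 ^ 2 - x0 ^ 2) + (2 * w 1 - w 2 - w 0) * x1 ^ 2) / sq)
        + w 2 * (((w 1 - w 0) * (x0 ^ 2 - x1 ^ 2) + (2 * w 2 - w 0 - w 1) * x2 ^ 2) / sq)
        = (w 0 * ((w 2 - w 1) * (x1 ^ 2 - x2 ^ 2) + (2 * w 0 - w 1 - w 2) * x0 ^ 2)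
          + w 1 * ((w 0 - w 2) * (x2 ^ 2 - x0 ^ 2) + (2 * w 1 - w 2 - w 0) * x1 ^ 2)
          + w 2 * ((w 1 - w 0) * (x0 ^ 2 - x1 ^ 2) + (2 * w 2 - w 0 - w 1) * x2 ^ 2)) / sq := by
      ring
    rw [eform]
    exact div_pos hP hsq
  -- continuity of φe
  have hφfun : (fun t : ℝ => (fderiv ℝ F (u + t • w)) w) = φe := funext hφeq
  have hφcont : Continuous φe := by
    rw [← hφfun]
    exact ((hF.continuous_fderiv one_ne_zero).comp
      (continuous_const.add (continuous_id.smul continuous_const))).clm_apply continuous_const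
  -- strict monotonicity of the derivative
  have hmono : StrictMonoOn φe (Set.Icc 0 1) := by
    apply strictMonoOn_of_deriv_pos (convex_Icc 0 1) hφcont.continuousOn
    intro x hx
    rw [interior_Icc] at hx
    obtain ⟨d, hd, hdpos⟩ := key x (Set.Ioo_subset_Icc_self hx)
    rw [hd.deriv]
    exact hdpos
  -- strict convexity of g
  have hgderiv : deriv (fun s => F (u + s • w)) = φe := by
    funext t
    rw [(hgd t).deriv, hφeq t]
  have hgc : ContinuousOn (fun s : ℝ => F (u + s • w)) (Set.Icc 0 1) :=
    (hF.continuous.comp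
      (continuous_const.add (continuous_id.smul continuous_const))).continuousOn
  have hconv : StrictConvexOn ℝ (Set.Icc 0 1) (fun s : ℝ => F (u + s • w)) := by
    apply StrictMonoOn.strictConvexOn_of_deriv (convex_Icc 0 1) hgc
    rw [hgderiv, interior_Icc]
    exact hmono.mono Set.Ioo_subset_Icc_self
  have h2 := hconv.2 (Set.left_mem_Icc.2 zero_le_one) (Set.right_mem_Icc.2 zero_le_one)
    (by norm_num : (0:ℝ) ≠ 1) (by norm_num : (0:ℝ) < 1/2) (by norm_num : (0:ℝ) < 1/2)
    (by norm_num)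
  have emid : u + ((1/2 : ℝ) • (0:ℝ) + (1/2 : ℝ) • (1:ℝ)) • w = ((1:ℝ)/2) • (u + v) := by
    have e : ((1/2 : ℝ) • (0:ℝ) + (1/2 : ℝ) • (1:ℝ)) = (1/2 : ℝ) := by norm_num
    rw [e, hw]
    funext m
    simp [Pi.add_apply, Pi.smul_apply, Pi.sub_apply, smul_eq_mul]
    ring
  have e0 : u + (0:ℝ) • w = u := by simp
  have e1 : u + (1:ℝ) • w = v := by rw [hw]; simp
  have h2' : F (u + ((1/2 : ℝ) • (0:ℝ) + (1/2 : ℝ) • (1:ℝ)) • w)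
      < (1/2 : ℝ) • F (u + (0:ℝ) • w) + (1/2 : ℝ) • F (u + (1:ℝ) • w) := h2
  rw [emid, e0, e1] at h2'
  simp only [smul_eq_mul] at h2'
  linarith
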